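/- Let X be a set and let 𝒜, ℬ be collections of subsets of X such that 𝒜 is Γ-like, 𝒜 is closed under finite unions, and 𝒜 ⊆ ℬ. Then α₁(𝒜,ℬ) holds if and only if α_{1.1}(𝒜,ℬ) holds. -/
import Mathlib


open Set

/-- A collection `𝒜` of subsets of `X` is Γ-like if every member is infinite
and every infinite subset of a member is itself a member. -/
def GammaLike {X : Type*} (𝒜 : Set (Set X)) : Prop :=
  ∀ A ∈ 𝒜, A.Infinite ∧ ∀ A' ⊆ A, A'.Infinite → A' ∈ 𝒜

/-- A collection `𝒜` is almost-Γ-like if each `A ∈ 𝒜` has a countably infinite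
subset `A'` all of whose cofinite subsets belong to `𝒜`. -/
def AlmostGammaLike {X : Type*} (𝒜 : Set (Set X)) : Prop :=
  ∀ A ∈ 𝒜, ∃ A' ⊆ A, A'.Countable ∧ A'.Infinite ∧
    ∀ A'' ⊆ A', (A' \ A'').Finite → A'' ∈ 𝒜

/-- `𝒜` is closed under finite unions. -/
def UnionClosed {X : Type*} (𝒜 : Set (Set X)) : Prop :=
  ∀ A ∈ 𝒜, ∀ B ∈ 𝒜, A ∪ B ∈ 𝒜

/-- α₁(𝒜,ℬ): for every sequence from 𝒜 there is `B ∈ ℬ` with `A n \ B` finite for all `n`. -/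
def Alpha1 {X : Type*} (𝒜 ℬ : Set (Set X)) : Prop :=
  ∀ A : ℕ → Set X, (∀ n, A n ∈ 𝒜) → ∃ B ∈ ℬ, ∀ n, (A n \ B).Finite

/-- α₂(𝒜,ℬ): for every sequence from 𝒜 there is `B ∈ ℬ` meeting each `A n` infinitely. -/
def Alpha2 {X : Type*} (𝒜 ℬ : Set (Set X)) : Prop :=
  ∀ A : ℕ → Set X, (∀ n, A n ∈ 𝒜) → ∃ B ∈ ℬ, ∀ n, (A n ∩ B).Infinite

/-- α₂'(𝒜,ℬ): for every sequence from 𝒜 there is `B ∈ ℬ` meeting each `A n`. -/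
def Alpha2' {X : Type*} (𝒜 ℬ : Set (Set X)) : Prop :=
  ∀ A : ℕ → Set X, (∀ n, A n ∈ 𝒜) → ∃ B ∈ ℬ, ∀ n, (A n ∩ B).Nonempty

/-- α₃(𝒜,ℬ): for every sequence from 𝒜 there is `B ∈ ℬ` meeting infinitely many `A n` infinitely. -/
def Alpha3 {X : Type*} (𝒜 ℬ : Set (Set X)) : Prop :=
  ∀ A : ℕ → Set X, (∀ n, A n ∈ 𝒜) → ∃ B ∈ ℬ, {n | (A n ∩ B).Infinite}.Infinite

/-- α₄(𝒜,ℬ): for every sequence from 𝒜 there is `B ∈ ℬ` meeting infinitely many `A n`. -/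
def Alpha4 {X : Type*} (𝒜 ℬ : Set (Set X)) : Prop :=
  ∀ A : ℕ → Set X, (∀ n, A n ∈ 𝒜) → ∃ B ∈ ℬ, {n | (A n ∩ B).Nonempty}.Infinite

/-- α_{1.1}(𝒜,ℬ): α₁ restricted to pairwise disjoint sequences. -/
def Alpha1p1 {X : Type*} (𝒜 ℬ : Set (Set X)) : Prop :=
  ∀ A : ℕ → Set X, (∀ n, A n ∈ 𝒜) → (∀ m n, m ≠ n → Disjoint (A m) (A n)) →
    ∃ B ∈ ℬ, ∀ n, (A n \ B).Finite

/-- α_{1.5}(𝒜,ℬ): for pairwise disjoint sequences from 𝒜 there is `B ∈ ℬ` with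
`A n \ B` finite for infinitely many `n`. -/
def Alpha1p5 {X : Type*} (𝒜 ℬ : Set (Set X)) : Prop :=
  ∀ A : ℕ → Set X, (∀ n, A n ∈ 𝒜) → (∀ m n, m ≠ n → Disjoint (A m) (A n)) →
    ∃ B ∈ ℬ, {n | (A n \ B).Finite}.Infinite

/-- α_{2.1}(𝒜,ℬ): α₂ restricted to pairwise disjoint sequences. -/
def Alpha2p1 {X : Type*} (𝒜 ℬ : Set (Set X)) : Prop :=
  ∀ A : ℕ → Set X, (∀ n, A n ∈ 𝒜) → (∀ m n, m ≠ n → Disjoint (A m) (A n)) →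
    ∃ B ∈ ℬ, ∀ n, (A n ∩ B).Infinite

/-- α_{3.1}(𝒜,ℬ): α₃ restricted to pairwise disjoint sequences. -/
def Alpha3p1 {X : Type*} (𝒜 ℬ : Set (Set X)) : Prop :=
  ∀ A : ℕ → Set X, (∀ n, A n ∈ 𝒜) → (∀ m n, m ≠ n → Disjoint (A m) (A n)) →
    ∃ B ∈ ℬ, {n | (A n ∩ B).Infinite}.Infinite

/-- α_{4.1}(𝒜,ℬ): α₄ restricted to pairwise disjoint sequences. -/
def Alpha4p1 {X : Type*} (𝒜 ℬ : Set (Set X)) : Prop :=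
  ∀ A : ℕ → Set X, (∀ n, A n ∈ 𝒜) → (∀ m n, m ≠ n → Disjoint (A m) (A n)) →
    ∃ B ∈ ℬ, {n | (A n ∩ B).Nonempty}.Infinite

/-- Player I has a winning predetermined strategy in G₁(𝒜,ℬ). -/
def PredWinG1 {X : Type*} (𝒜 ℬ : Set (Set X)) : Prop :=
  ∃ A : ℕ → Set X, (∀ n, A n ∈ 𝒜) ∧
    ∀ a : ℕ → X, (∀ n, a n ∈ A n) → Set.range a ∉ ℬ

/-- Player I has a winning predetermined strategy in G_fin(𝒜,ℬ). -/
def PredWinGfin {X : Type*} (𝒜 ℬ : Set (Set X)) : Prop :=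
  ∃ A : ℕ → Set X, (∀ n, A n ∈ 𝒜) ∧
    ∀ F : ℕ → Set X, (∀ n, (F n).Finite ∧ F n ⊆ A n) → (⋃ n, F n) ∉ ℬ

/-- Player I has a winning predetermined strategy in G_{<2}(𝒜,ℬ),
where II picks at most one point each round. -/
def PredWinGlt2 {X : Type*} (𝒜 ℬ : Set (Set X)) : Prop :=
  ∃ A : ℕ → Set X, (∀ n, A n ∈ 𝒜) ∧
    ∀ F : ℕ → Set X, (∀ n, (F n).Subsingleton ∧ F n ⊆ A n) → (⋃ n, F n) ∉ ℬ

/-- Player I has a winning predetermined strategy in G_cf(𝒜,ℬ),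
where II picks a cofinite subset each round. -/
def PredWinGcf {X : Type*} (𝒜 ℬ : Set (Set X)) : Prop :=
  ∃ A : ℕ → Set X, (∀ n, A n ∈ 𝒜) ∧
    ∀ B : ℕ → Set X, (∀ n, B n ⊆ A n ∧ (A n \ B n).Finite) → (⋃ n, B n) ∉ ℬ

/-- Player I has a winning perfect-information strategy in G₁(𝒜,ℬ):
a function from finite sequences of points of X into 𝒜 defeating all counterplays. -/
def WinG1 {X : Type*} (𝒜 ℬ : Set (Set X)) : Prop :=
  ∃ σ : List X → Set X, (∀ s, σ s ∈ 𝒜) ∧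
    ∀ a : ℕ → X, (∀ n, a n ∈ σ (List.ofFn fun i : Fin n => a i)) → Set.range a ∉ ℬ

/-- Player I has a winning perfect-information strategy in G_fin(𝒜,ℬ):
a function from finite sequences of finite subsets of X into 𝒜 defeating all counterplays. -/
def WinGfin {X : Type*} (𝒜 ℬ : Set (Set X)) : Prop :=
  ∃ σ : List (Set X) → Set X, (∀ s : List (Set X), (∀ F ∈ s, F.Finite) → σ s ∈ 𝒜) ∧
    ∀ F : ℕ → Set X,
      (∀ n, (F n).Finite ∧ F n ⊆ σ (List.ofFn fun i : Fin n => F i)) →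
      (⋃ n, F n) ∉ ℬ

/-- Player I has a winning perfect-information strategy in G_{<2}(𝒜,ℬ):
a function from finite sequences of at-most-singleton subsets of X into 𝒜
defeating all counterplays. -/
def WinGlt2 {X : Type*} (𝒜 ℬ : Set (Set X)) : Prop :=
  ∃ σ : List (Set X) → Set X, (∀ s : List (Set X), (∀ F ∈ s, F.Subsingleton) → σ s ∈ 𝒜) ∧
    ∀ F : ℕ → Set X,
      (∀ n, (F n).Subsingleton ∧ F n ⊆ σ (List.ofFn fun i : Fin n => F i)) →
      (⋃ n, F n) ∉ ℬ

/-- If 𝒜 is Γ-like, closed under finite unions, and 𝒜 ⊆ ℬ, then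
α₁(𝒜,ℬ) holds iff α_{1.1}(𝒜,ℬ) holds. -/
theorem stmt16 {X : Type*} (𝒜 ℬ : Set (Set X))
    (hA : GammaLike 𝒜) (hU : UnionClosed 𝒜) (hAB : 𝒜 ⊆ ℬ) :
    Alpha1 𝒜 ℬ ↔ Alpha1p1 𝒜 ℬ := by
  constructor
  · intro h A hAm _
    exact h A hAm
  · intro h A hAm
    classical
    set C : ℕ → Set X := fun n => ⋃ k ∈ Finset.range (n+1), A k with hCdef
    have hCsucc : ∀ n, C (n+1) = A (n+1) ∪ C n := by
      intro n
      simp only [hCdef, Finset.range_add_one, Finset.set_biUnion_insert]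
    have hCmem : ∀ n, C n ∈ 𝒜 := by
      intro n
      induction n with
      | zero => simpa [hCdef] using hAm 0
      | succ n ih => rw [hCsucc]; exact hU _ (hAm (n+1)) _ ih
    have hCmono : ∀ m n, m ≤ n → C m ⊆ C n := by
      intro m n hmn x hx
      simp only [hCdef, Set.mem_iUnion, Finset.mem_range] at hx ⊢
      obtain ⟨k, hk, hxk⟩ := hx
      exact ⟨k, by omega, hxk⟩
    have hAC : ∀ n, A n ⊆ C n := by
      intro n x hx
      simp only [hCdef, Set.mem_iUnion, Finset.mem_range]
      exact ⟨n, by omega, hx⟩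
    by_cases hI : {n | (C (n+1) \ C n).Infinite}.Infinite
    · have hgt : ∀ a : ℕ, ∃ b, (C (b+1) \ C b).Infinite ∧ a < b := by
        intro a
        obtain ⟨b, hb, hab⟩ := hI.exists_gt a
        exact ⟨b, hb, hab⟩
      choose g hgI hglt using hgt
      let f : ℕ → ℕ := fun n => Nat.rec (g 0) (fun _ prev => g prev) n
      have hfI : ∀ n, (C (f n + 1) \ C (f n)).Infinite := by
        intro n; cases n with
        | zero => exact hgI 0
        | succ k => exact hgI (f k)
      have hfmono : StrictMono f := strictMono_nat_of_lt_succ (fun n => hglt (f n))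
      let D : ℕ → Set X := fun k =>
        Nat.casesOn k (C (f 0 + 1)) (fun j => C (f (j+1) + 1) \ C (f j + 1))
      have hDsub : ∀ k, D k ⊆ C (f k + 1) := by
        intro k; cases k with
        | zero => exact subset_rfl
        | succ j => exact Set.diff_subset
      have hDinf : ∀ k, (D k).Infinite := by
        intro k; cases k with
        | zero => exact (hA _ (hCmem _)).1
        | succ j =>
          exact (hfI (j+1)).mono
            (Set.diff_subset_diff subset_rfl (hCmono _ _ (hfmono (lt_add_one j))))
      have hDmem : ∀ k, D k ∈ 𝒜 :=
        fun k => (hA _ (hCmem (f k + 1))).2 _ (hDsub k) (hDinf k)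
      have key : ∀ m j, m < j + 1 → Disjoint (D m) (D (j+1)) := by
        intro m j hmj
        rw [Set.disjoint_left]
        intro x hxm hxn
        have hmle : f m ≤ f j := hfmono.monotone (Nat.lt_succ_iff.mp hmj)
        have h1 : x ∈ C (f j + 1) :=
          hCmono (f m + 1) (f j + 1) (by omega) (hDsub m hxm)
        exact hxn.2 h1
      have hDdisj : ∀ m n, m ≠ n → Disjoint (D m) (D n) := by
        intro m n hmn
        rcases lt_or_gt_of_ne hmn with hlt | hlt
        · cases n with
          | zero => omega
          | succ j => exact key m j hlt
        · cases m with
          | zero => omega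
          | succ j => exact (key n j hlt).symm
      have hcover : ∀ k, ∀ x ∈ C (f k + 1), ∃ j ≤ k, x ∈ D j := by
        intro k
        induction k with
        | zero => intro x hx; exact ⟨0, le_refl 0, hx⟩
        | succ k ih =>
          intro x hx
          by_cases hx' : x ∈ C (f k + 1)
          · obtain ⟨j, hj, hxj⟩ := ih x hx'
            exact ⟨j, by omega, hxj⟩
          · exact ⟨k+1, le_refl _, hx, hx'⟩
      obtain ⟨B, hB, hBfin⟩ := h D hDmem hDdisj
      refine ⟨B, hB, fun n => ?_⟩
      have hsub : A n \ B ⊆ ⋃ j : Fin (n+1), (D j.1 \ B) := by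
        intro x hx
        have hxC : x ∈ C (f n + 1) :=
          hCmono n (f n + 1) (by have hle : n ≤ f n := hfmono.le_apply; omega) (hAC n hx.1)
        obtain ⟨j, hj, hxj⟩ := hcover n x hxC
        exact Set.mem_iUnion.mpr ⟨⟨j, by omega⟩, hxj, hx.2⟩
      exact (Set.finite_iUnion (fun j : Fin (n+1) => hBfin j.1)).subset hsub
    · rw [Set.not_infinite] at hI
      obtain ⟨N, hN⟩ := hI.bddAbove
      have hfin : ∀ n, N + 1 ≤ n → (C (n+1) \ C n).Finite := by
        intro n hn
        by_contra hc
        have hmem : n ∈ {n | (C (n+1) \ C n).Infinite} := hc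
        have := hN hmem
        omega
      have hfin2 : ∀ m, (C (N + 1 + m) \ C (N + 1)).Finite := by
        intro m
        induction m with
        | zero => simp
        | succ m ih =>
          have h1 := hfin (N + 1 + m) (by omega)
          refine (h1.union ih).subset ?_
          intro x hx
          by_cases hx' : x ∈ C (N + 1 + m)
          · exact Or.inr ⟨hx', hx.2⟩
          · refine Or.inl ⟨?_, hx'⟩
            have he : N + 1 + (m + 1) = N + 1 + m + 1 := by omega
            rw [he] at hx
            exact hx.1
      refine ⟨C (N+1), hAB (hCmem (N+1)), fun n => ?_⟩
      have hsub : A n \ C (N+1) ⊆ C (N + 1 + n) \ C (N+1) :=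
        Set.diff_subset_diff ((hAC n).trans (hCmono n (N+1+n) (by omega))) subset_rfl
      exact (hfin2 n).subset hsub
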